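/- arXiv:0910.1958 — 5 statements merged into one kernel-verified Lean document; each statement's English description precedes it below -/
import Mathlib

section
/- Let (X,μ,T) be a conservative ergodic nonsingular dynamical system with T forward measurable, and let d be a μ-compatible metric on X. Suppose that for every δ > 0 there exists x ∈ X with μ(B_{T_δ}(x)) > 0, where B_{T_δ} denotes balls in the metric d_T. Then there is a μ-null set S ⊆ X such that every d_T-ball centered at any point of X \ S has positive μ-measure (i.e., d_T restricted to X \ S is μ-compatible). -/
open MeasureTheory
open scoped ENNReal

/-- The metric `d_T(x,y) = min (sup_{n ≥ 0} d(Tⁿx, Tⁿy)) 1`. -/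
noncomputable def dT {X : Type*} [PseudoMetricSpace X] (T : X → X) (x y : X) : ℝ :=
  (min (⨆ n : ℕ, edist (T^[n] x) (T^[n] y)) 1).toReal

section aux

variable {X : Type*} [PseudoMetricSpace X] (T : X → X)

/-- ENNReal-valued version of `dT`. -/
noncomputable def eT (x y : X) : ℝ≥0∞ :=
  min (⨆ n : ℕ, edist (T^[n] x) (T^[n] y)) 1

lemma dT_eq_toReal (x y : X) : dT T x y = (eT T x y).toReal := rfl

lemma eT_le_one (x y : X) : eT T x y ≤ 1 := min_le_right _ _

lemma eT_ne_top (x y : X) : eT T x y ≠ ⊤ :=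
  ne_top_of_le_ne_top ENNReal.one_ne_top (eT_le_one T x y)

lemma eT_comm (x y : X) : eT T x y = eT T y x := by
  unfold eT
  simp [edist_comm]

lemma min_add_one {a b : ℝ≥0∞} : min (a + b) 1 ≤ min a 1 + min b 1 := by
  rcases le_total 1 a with h | h
  · calc min (a+b) 1 ≤ 1 := min_le_right _ _
      _ = min a 1 + 0 := by rw [min_eq_right h]; ring
      _ ≤ min a 1 + min b 1 := by gcongr; exact zero_le
  rcases le_total 1 b with h' | h'
  · calc min (a+b) 1 ≤ 1 := min_le_right _ _
      _ = 0 + min b 1 := by rw [min_eq_right h']; ring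
      _ ≤ min a 1 + min b 1 := by gcongr; exact zero_le
  · rw [min_eq_left h, min_eq_left h']
    exact min_le_left _ _

lemma eT_triangle (x y z : X) : eT T x z ≤ eT T x y + eT T y z := by
  have h1 : (⨆ n : ℕ, edist (T^[n] x) (T^[n] z)) ≤
      (⨆ n : ℕ, edist (T^[n] x) (T^[n] y)) + ⨆ n : ℕ, edist (T^[n] y) (T^[n] z) := by
    refine iSup_le fun n => ?_
    calc edist (T^[n] x) (T^[n] z) ≤ edist (T^[n] x) (T^[n] y) + edist (T^[n] y) (T^[n] z) :=
        edist_triangle _ _ _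
      _ ≤ _ := add_le_add (le_iSup (fun n => edist (T^[n] x) (T^[n] y)) n)
        (le_iSup (fun n => edist (T^[n] y) (T^[n] z)) n)
  calc eT T x z ≤ min ((⨆ n : ℕ, edist (T^[n] x) (T^[n] y)) +
        ⨆ n : ℕ, edist (T^[n] y) (T^[n] z)) 1 := min_le_min h1 le_rfl
    _ ≤ _ := min_add_one

lemma eT_apply_le (x y : X) : eT T (T x) (T y) ≤ eT T x y := by
  refine min_le_min ?_ le_rfl
  refine iSup_le fun n => ?_
  have : edist (T^[n] (T x)) (T^[n] (T y)) = edist (T^[n+1] x) (T^[n+1] y) := by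
    rw [Function.iterate_succ_apply, Function.iterate_succ_apply]
  rw [this]
  exact le_iSup (fun n => edist (T^[n] x) (T^[n] y)) (n+1)

lemma dT_triangle (x y z : X) : dT T x z ≤ dT T x y + dT T y z := by
  rw [dT_eq_toReal, dT_eq_toReal, dT_eq_toReal]
  rw [← ENNReal.toReal_add (eT_ne_top T x y) (eT_ne_top T y z)]
  exact ENNReal.toReal_mono (ENNReal.add_ne_top.2 ⟨eT_ne_top T x y, eT_ne_top T y z⟩)
    (eT_triangle T x y z)

lemma dT_comm (x y : X) : dT T x y = dT T y x := by
  rw [dT_eq_toReal, dT_eq_toReal, eT_comm]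

lemma dT_apply_le (x y : X) : dT T (T x) (T y) ≤ dT T x y :=
  ENNReal.toReal_mono (eT_ne_top T x y) (eT_apply_le T x y)

lemma dT_mono_ball {x y : X} {r r' : ℝ} (h : r ≤ r') (hxy : dT T x y < r) :
    dT T x y < r' := lt_of_lt_of_le hxy h

end aux

section meas

variable {X : Type*} [MetricSpace X] [MeasurableSpace X] [OpensMeasurableSpace X]

lemma measurable_dT {T : X → X} (hT : Measurable T) (x : X) :
    Measurable fun y => dT T x y := by
  apply Measurable.ennreal_toReal
  apply Measurable.min _ measurable_const
  apply Measurable.iSup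
  intro n
  exact (continuous_const.edist continuous_id).measurable.comp (hT.iterate n)

lemma measurableSet_dT_ball {T : X → X} (hT : Measurable T) (x : X) (r : ℝ) :
    MeasurableSet {y | dT T x y < r} :=
  measurableSet_lt (measurable_dT hT x) measurable_const

end meas

/-- Let `(X,μ,T)` be a conservative ergodic nonsingular system with `T` forward
measurable and `d` a `μ`-compatible metric. If for every `δ > 0` some `d_T`-ball of
radius `δ` has positive measure, then off a null set `S`, every `d_T`-ball centered
in `X \ S` has positive measure. -/
theorem dT_compatible_off_null_set {X : Type*} [MetricSpace X] [MeasurableSpace X]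
    [OpensMeasurableSpace X]
    (μ : Measure X) [SigmaFinite μ] (T : X → X) (hT : Measurable T)
    (hNS : ∀ A : Set X, MeasurableSet A → (μ A = 0 ↔ μ (T ⁻¹' A) = 0))
    (hCons : ∀ A : Set X, MeasurableSet A → 0 < μ A →
      ∃ n : ℕ, 0 < n ∧ 0 < μ (A ∩ T^[n] ⁻¹' A))
    (hErg : ∀ A : Set X, MeasurableSet A → T ⁻¹' A =ᵐ[μ] A → μ A = 0 ∨ μ Aᶜ = 0)
    (hFwd : ∀ A : Set X, MeasurableSet A → MeasurableSet (T '' A))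
    (hcomp : ∀ (x : X) (r : ℝ), 0 < r → 0 < μ (Metric.ball x r))
    (hpos : ∀ δ : ℝ, 0 < δ → ∃ x : X, 0 < μ {y : X | dT T x y < δ}) :
    ∃ S : Set X, MeasurableSet S ∧ μ S = 0 ∧
      ∀ x ∉ S, ∀ r : ℝ, 0 < r → 0 < μ {y : X | dT T x y < r} := by
  -- Forward images of positive measure sets are positive
  have himg : ∀ A : Set X, MeasurableSet A → 0 < μ A →
      MeasurableSet (T '' A) ∧ 0 < μ (T '' A) := by
    intro A hA hpA
    refine ⟨hFwd A hA, ?_⟩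
    rw [pos_iff_ne_zero]
    intro h0
    have := (hNS _ (hFwd A hA)).1 h0
    have : μ A = 0 := measure_mono_null (Set.subset_preimage_image T A) this
    exact absurd this (ne_of_gt hpA)
  -- measurability of iterated images
  have himgIter : ∀ (n : ℕ) (A : Set X), MeasurableSet A → MeasurableSet (T^[n] '' A) := by
    intro n
    induction n with
    | zero => intro A hA; simpa using hA
    | succ n ih =>
      intro A hA
      have : T^[n+1] '' A = T '' (T^[n] '' A) := by
        rw [Function.iterate_succ', Set.image_comp]
      rw [this]
      exact hFwd _ (ih A hA)
  -- positivity of balls propagates forward along orbits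
  have hstep : ∀ (a : X) (s : ℝ), 0 < μ {z | dT T a z < s} → 0 < μ {z | dT T (T a) z < s} := by
    intro a s hp
    have hB := measurableSet_dT_ball hT a s
    obtain ⟨hm, hpos'⟩ := himg _ hB hp
    refine lt_of_lt_of_le hpos' (measure_mono ?_)
    rintro _ ⟨w, hw, rfl⟩
    exact lt_of_le_of_lt (dT_apply_le T a w) hw
  have hiter : ∀ (a : X) (s : ℝ), 0 < μ {z | dT T a z < s} →
      ∀ n : ℕ, 0 < μ {z | dT T (T^[n] a) z < s} := by
    intro a s hp n
    induction n with
    | zero => simpa using hp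
    | succ n ih =>
      rw [Function.iterate_succ_apply']
      exact hstep _ _ ih
  -- for each k, get the good set V k
  have hVk : ∀ k : ℕ, ∃ V : Set X, MeasurableSet V ∧ μ Vᶜ = 0 ∧
      ∀ x ∈ V, 0 < μ {y | dT T x y < 2 / (k + 1 : ℝ)} := by
    intro k
    have hδ : (0:ℝ) < 1 / (k + 1 : ℝ) := by positivity
    obtain ⟨x₀, hx₀⟩ := hpos _ hδ
    set δ : ℝ := 1 / (k + 1 : ℝ) with hδdef
    set A : Set X := {y | dT T x₀ y < δ} with hAdef
    have hA : MeasurableSet A := measurableSet_dT_ball hT x₀ δ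
    set V : Set X := ⋃ n : ℕ, T^[n] '' A with hVdef
    have hV : MeasurableSet V := MeasurableSet.iUnion fun n => himgIter n A hA
    -- A is contained in the ball of radius 2δ around any of its points
    have hAsub : ∀ a ∈ A, A ⊆ {z | dT T a z < 2 * δ} := by
      intro a ha z hz
      have : dT T a z ≤ dT T a x₀ + dT T x₀ z := dT_triangle T a x₀ z
      rw [dT_comm T a x₀] at this
      calc dT T a z ≤ dT T x₀ a + dT T x₀ z := this
        _ < δ + δ := add_lt_add ha hz
        _ = 2 * δ := by ring
    -- every point of V has a positive ball of radius 2δ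
    have hVgood : ∀ x ∈ V, 0 < μ {y | dT T x y < 2 * δ} := by
      intro x hx
      obtain ⟨n, a, ha, rfl⟩ := by simpa [hVdef] using hx
      have hpa : 0 < μ {z | dT T a z < 2 * δ} :=
        lt_of_lt_of_le hx₀ (measure_mono (hAsub a ha))
      exact hiter a (2 * δ) hpa n
    -- V is forward invariant
    have hTV : ∀ x ∈ V, T x ∈ V := by
      intro x hx
      obtain ⟨n, a, ha, rfl⟩ := by simpa [hVdef] using hx
      have : T (T^[n] a) = T^[n+1] a := (Function.iterate_succ_apply' T n a).symm
      rw [this]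
      exact Set.mem_iUnion.2 ⟨n+1, a, ha, rfl⟩
    have hTnV : ∀ (m : ℕ) (x), x ∈ V → T^[m] x ∈ V := by
      intro m
      induction m with
      | zero => intro x hx; simpa using hx
      | succ m ih =>
        intro x hx
        rw [Function.iterate_succ_apply']
        exact hTV _ (ih x hx)
    have hVsub : V ⊆ T ⁻¹' V := fun x hx => hTV x hx
    -- the difference T⁻¹V \ V is null, by conservativity
    have hDnull : μ (T ⁻¹' V \ V) = 0 := by
      by_contra h0
      have hD : MeasurableSet (T ⁻¹' V \ V) := (hV.preimage hT).diff hV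
      have hDpos : 0 < μ (T ⁻¹' V \ V) := pos_iff_ne_zero.2 h0
      obtain ⟨n, hn, hpos'⟩ := hCons _ hD hDpos
      have : (T ⁻¹' V \ V) ∩ T^[n] ⁻¹' (T ⁻¹' V \ V) = ∅ := by
        apply Set.eq_empty_iff_forall_notMem.2
        rintro x ⟨⟨hTxV, _⟩, hpre⟩
        have hnx : T^[n] x ∈ T ⁻¹' V \ V := hpre
        obtain ⟨m, rfl⟩ : ∃ m, n = m + 1 := ⟨n - 1, (Nat.succ_pred_eq_of_pos hn).symm⟩
        refine hnx.2 ?_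
        rw [Function.iterate_succ_apply]
        exact hTnV m (T x) hTxV
      rw [this] at hpos'
      simp at hpos'
    have hae : T ⁻¹' V =ᵐ[μ] V := by
      rw [MeasureTheory.ae_eq_set]
      constructor
      · exact hDnull
      · rw [Set.diff_eq_empty.2 hVsub]; simp
    have hVpos : μ V ≠ 0 := by
      have hAV : A ⊆ V := by
        intro a ha
        exact Set.mem_iUnion.2 ⟨0, a, ha, rfl⟩
      exact fun h => absurd (measure_mono_null hAV h) (ne_of_gt hx₀)
    rcases hErg V hV hae with h | h
    · exact absurd h hVpos
    · refine ⟨V, hV, h, fun x hx => ?_⟩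
      have := hVgood x hx
      have h2δ : 2 * δ = 2 / (k + 1 : ℝ) := by
        rw [hδdef]; ring
      rwa [h2δ] at this
  choose V hVmeas hVnull hVgood using hVk
  refine ⟨(⋂ k, V k)ᶜ, (MeasurableSet.iInter fun k => hVmeas k).compl, ?_, ?_⟩
  · rw [Set.compl_iInter]
    exact measure_iUnion_null hVnull
  · intro x hx r hr
    rw [Set.notMem_compl_iff, Set.mem_iInter] at hx
    obtain ⟨k, hk⟩ := exists_nat_gt (2 / r)
    have hk1 : 2 / (k + 1 : ℝ) < r := by
      rw [div_lt_iff₀ (by positivity)]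
      rw [div_lt_iff₀ hr] at hk
      nlinarith
    refine lt_of_lt_of_le (hVgood k x (hx k)) (measure_mono ?_)
    intro y hy
    exact lt_trans hy hk1
end

section
/- Let (X,μ,T) be an ergodic finite measure-preserving dynamical system and d a μ-compatible metric satisfying d(Tx,Ty) ≤ d(x,y) for all x,y ∈ X. Then T is a d-isometry: d(Tx,Ty) = d(x,y) for all x,y ∈ X. -/
open MeasureTheory

/-- For an ergodic finite measure-preserving system with a `μ`-compatible metric
satisfying `d(Tx,Ty) ≤ d(x,y)`, the map `T` is an isometry. -/
theorem one_lipschitz_implies_isometry {X : Type*} [MetricSpace X] [MeasurableSpace X]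
    [OpensMeasurableSpace X]
    (μ : Measure X) [IsFiniteMeasure μ] (T : X → X)
    (hErg : Ergodic T μ)
    (hcomp : ∀ (x : X) (r : ℝ), 0 < r → 0 < μ (Metric.ball x r))
    (hLip : ∀ x y : X, dist (T x) (T y) ≤ dist x y) :
    ∀ x y : X, dist (T x) (T y) = dist x y := by
  intro x y
  by_contra hne
  have hlt : dist (T x) (T y) < dist x y := lt_of_le_of_ne (hLip x y) hne
  set ε : ℝ := (dist x y - dist (T x) (T y)) / 4 with hε
  have hεpos : 0 < ε := by
    rw [hε]; linarith
  -- the product system is measure preserving, hence conservative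
  have hmp : MeasurePreserving (Prod.map T T) (μ.prod μ) (μ.prod μ) :=
    hErg.toMeasurePreserving.prod hErg.toMeasurePreserving
  have hcons : Conservative (Prod.map T T) (μ.prod μ) := hmp.conservative
  set s : Set (X × X) := (Metric.ball x ε) ×ˢ (Metric.ball y ε) with hs
  have hsm : MeasurableSet s :=
    (Metric.isOpen_ball.measurableSet).prod Metric.isOpen_ball.measurableSet
  have hs0 : μ.prod μ s ≠ 0 := by
    rw [hs, Measure.prod_prod]
    exact (ENNReal.mul_pos (hcomp x ε hεpos).ne' (hcomp y ε hεpos).ne').ne'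
  obtain ⟨⟨u, v⟩, huv, m, hm0, hmem⟩ :=
    hcons.exists_mem_iterate_mem hsm.nullMeasurableSet hs0
  have hmap : ∀ n, (Prod.map T T)^[n] (u, v) = (T^[n] u, T^[n] v) := fun n => by
    induction n with
    | zero => rfl
    | succ n ih =>
      rw [Function.iterate_succ_apply', ih]
      simp [Prod.map_apply, Function.iterate_succ_apply']
  rw [hmap m] at hmem
  obtain ⟨hu, hv⟩ := huv
  obtain ⟨hu', hv'⟩ := hmem
  -- positive iterates don't increase distance beyond dist (T u) (T v)
  have hiter : ∀ n, dist (T^[n+1] u) (T^[n+1] v) ≤ dist (T u) (T v) := by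
    intro n
    induction n with
    | zero => simp
    | succ n ih =>
      have hstep : dist (T^[n+1+1] u) (T^[n+1+1] v) ≤ dist (T^[n+1] u) (T^[n+1] v) := by
        simp only [Function.iterate_succ_apply']
        exact hLip _ _
      exact hstep.trans ih
  obtain ⟨k, rfl⟩ : ∃ k, m = k + 1 := ⟨m - 1, (Nat.succ_pred_eq_of_pos (Nat.pos_of_ne_zero hm0)).symm⟩
  have hub : dist (T^[k+1] u) (T^[k+1] v) < dist (T x) (T y) + 2 * ε := by
    calc dist (T^[k+1] u) (T^[k+1] v) ≤ dist (T u) (T v) := hiter k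
      _ ≤ dist (T u) (T x) + dist (T x) (T y) + dist (T y) (T v) :=
          dist_triangle4 _ _ _ _
      _ ≤ dist u x + dist (T x) (T y) + dist y v := by
          have h1 := hLip u x
          have h2 := hLip y v
          linarith
      _ < ε + dist (T x) (T y) + ε := by
          have h1 : dist u x < ε := Metric.mem_ball.mp hu
          have h2 : dist y v < ε := by rw [dist_comm]; exact Metric.mem_ball.mp hv
          -- fixed below
          linarith
      _ = dist (T x) (T y) + 2 * ε := by ring
  have hlb : dist x y - 2 * ε ≤ dist (T^[k+1] u) (T^[k+1] v) := by
    have h1 : dist (T^[k+1] u) x < ε := Metric.mem_ball.mp hu'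
    have h2 : dist (T^[k+1] v) y < ε := Metric.mem_ball.mp hv'
    have := dist_triangle4 x (T^[k+1] u) (T^[k+1] v) y
    have h3 : dist x (T^[k+1] u) < ε := by rw [dist_comm]; exact h1
    have h4 : dist (T^[k+1] v) y < ε := h2
    linarith
  rw [hε] at hub hlb
  linarith
end

section
/- Let (X,μ,T) be an ergodic finite measure-preserving dynamical system and d a μ-compatible metric such that T is a d-isometry. Then (X,μ,T) is measurably isomorphic to a dynamical system (X₁,μ₁,T₁) where X₁ is a compact metric space, T₁ is an isometry of X₁, and the metric on X₁ is μ₁-compatible. (X₁ may be taken to be the metric completion of (X,d).) -/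
open MeasureTheory Metric Set

open Metric Set in
lemma lsc_measure_ball {X : Type} [PseudoMetricSpace X] [MeasurableSpace X]
    (μ : Measure X) (r : ℝ) :
    LowerSemicontinuous (fun x => μ (Metric.ball x r)) := by
  intro x a ha
  change a < μ (Metric.ball x r) at ha
  have hr : 0 < r := by
    by_contra h
    rw [Metric.ball_eq_empty.2 (le_of_not_gt h), measure_empty] at ha
    exact absurd ha (by simp)
  have hU : Metric.ball x r = ⋃ n : ℕ, Metric.ball x (r - 1 / (n + 1)) := by
    ext y
    simp only [mem_iUnion, Metric.mem_ball]
    constructor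
    · intro hy
      obtain ⟨n, hn⟩ := exists_nat_one_div_lt (sub_pos.2 hy)
      exact ⟨n, by push_cast at hn ⊢; linarith⟩
    · rintro ⟨n, hn⟩
      have : (0:ℝ) < 1 / (n + 1) := by positivity
      linarith
  have hmono : Monotone fun n : ℕ => Metric.ball x (r - 1 / (n + 1)) := by
    intro m n hmn
    apply Metric.ball_subset_ball
    have : (1:ℝ) / (n + 1) ≤ 1 / (m + 1) := by
      apply one_div_le_one_div_of_le (by positivity)
      exact_mod_cast by omega
    linarith
  rw [hU, hmono.directed_le.measure_iUnion] at ha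
  obtain ⟨n, hn⟩ := lt_iSup_iff.1 ha
  have hpos : (0:ℝ) < 1 / (n + 1) := by positivity
  filter_upwards [Metric.ball_mem_nhds x hpos] with y hy
  refine hn.trans_le (measure_mono ?_)
  intro z hz
  rw [Metric.mem_ball] at hz hy ⊢
  have := dist_triangle z x y
  rw [dist_comm x y] at this
  linarith


/-- An ergodic finite measure-preserving system whose `μ`-compatible metric makes `T`
an isometry is measurably isomorphic to a Kronecker system: a system `(X₁,μ₁,T₁)` where
`X₁` is a compact metric space, `T₁` an isometry of `X₁`, and the metric on `X₁` is
`μ₁`-compatible. -/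
theorem isometry_isomorphic_to_kronecker {X : Type} [MetricSpace X] [MeasurableSpace X]
    [OpensMeasurableSpace X]
    (μ : Measure X) [IsFiniteMeasure μ] (T : X → X)
    (hErg : Ergodic T μ)
    (hcomp : ∀ (x : X) (r : ℝ), 0 < r → 0 < μ (Metric.ball x r))
    (hIso : ∀ x y : X, dist (T x) (T y) = dist x y) :
    ∃ (X₁ : Type) (m₁ : MetricSpace X₁) (s₁ : MeasurableSpace X₁)
      (μ₁ : Measure X₁) (T₁ : X₁ → X₁) (φ : X → X₁) (U : Set X) (V : Set X₁),
      CompactSpace X₁ ∧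
      (∀ a b : X₁, dist (T₁ a) (T₁ b) = dist a b) ∧
      (∀ (x₁ : X₁) (r : ℝ), 0 < r → MeasurableSet (Metric.ball x₁ r) ∧
        0 < μ₁ (Metric.ball x₁ r)) ∧
      MeasurableSet U ∧ MeasurableSet V ∧
      μ Uᶜ = 0 ∧ μ₁ Vᶜ = 0 ∧
      Set.BijOn φ U V ∧ Measurable φ ∧
      (∀ A : Set X₁, MeasurableSet A → μ₁ A = μ (φ ⁻¹' A)) ∧
      (∀ x ∈ U, φ (T x) = T₁ (φ x)) := by
  classical
  have hT : Measurable T := hErg.toMeasurePreserving.measurable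
  have hTiso : Isometry T := Isometry.of_dist_eq hIso
  -- Step 1 : X is totally bounded
  have htb : TotallyBounded (Set.univ : Set X) := by
    rw [Metric.totallyBounded_iff]
    by_contra hcon
    push_neg at hcon
    obtain ⟨ε, hε, hcov⟩ := hcon
    -- get a point, hence Nonempty X
    obtain ⟨z₀, -, hz₀⟩ := not_subset.1 (hcov ∅ finite_empty)
    haveI : Nonempty X := ⟨z₀⟩
    set r : ℝ := ε / 8 with hr
    have hrpos : 0 < r := by positivity
    set g : X → ENNReal := fun x => μ (Metric.ball x r) with hg
    have g_meas : Measurable g := (lsc_measure_ball μ r).measurable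
    have hle : ∀ x, g x ≤ g (T x) := by
      intro x
      have hsub : Metric.ball x r ⊆ T ⁻¹' Metric.ball (T x) r := by
        intro y hy
        simp only [Set.mem_preimage, Metric.mem_ball] at *
        rw [hIso]; exact hy
      calc g x ≤ μ (T ⁻¹' Metric.ball (T x) r) := measure_mono hsub
        _ = g (T x) :=
          hErg.toMeasurePreserving.measure_preimage
            measurableSet_ball.nullMeasurableSet
    have hint : ∫⁻ x, g (T x) ∂μ = ∫⁻ x, g x ∂μ :=
      hErg.toMeasurePreserving.lintegral_comp g_meas
    have hgfin : ∫⁻ x, g x ∂μ ≠ ⊤ := by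
      refine ne_of_lt (lt_of_le_of_lt (lintegral_mono (g := fun _ => μ Set.univ)
        fun x => measure_mono (Set.subset_univ _)) ?_)
      rw [lintegral_const]
      exact ENNReal.mul_lt_top (measure_lt_top μ _) (measure_lt_top μ _)
    have hsub0 : ∫⁻ x, (g (T x) - g x) ∂μ = 0 := by
      rw [lintegral_sub g_meas hgfin (Filter.Eventually.of_forall hle), hint, tsub_self]
    have hae0 : ∀ᵐ x ∂μ, g (T x) - g x = 0 :=
      (lintegral_eq_zero_iff ((g_meas.comp hT).sub g_meas)).1 hsub0
    have hinv : g ∘ T =ᵐ[μ] g := by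
      filter_upwards [hae0] with x hx
      exact le_antisymm (tsub_eq_zero_iff_le.1 hx) (hle x)
    obtain ⟨c, hc⟩ := hErg.ae_eq_const_of_ae_eq_comp₀ g_meas.nullMeasurable hinv
    have hnull : μ {x | ¬ g x = c} = 0 := hc
    -- c is positive
    have hcpos : c ≠ 0 := by
      have huniv : μ Set.univ ≠ 0 :=
        ((hcomp z₀ 1 one_pos).trans_le (measure_mono (Set.subset_univ _))).ne'
      have hne : {x | g x = c}.Nonempty := by
        rw [Set.nonempty_iff_ne_empty]
        intro h
        apply huniv
        have hss : (Set.univ : Set X) ⊆ {x | ¬ g x = c} := by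
          intro x _
          simp only [Set.mem_setOf_eq]
          intro hx
          have : x ∈ ({x | g x = c} : Set X) := hx
          rw [h] at this
          exact this
        exact le_antisymm ((measure_mono hss).trans hnull.le) zero_le
      obtain ⟨x₀, hx₀⟩ := hne
      rw [← hx₀]
      exact (hcomp x₀ r hrpos).ne'
    -- build an ε/2-separated sequence in {g = c}
    haveI : Std.Symm (fun a b : X => ε / 2 ≤ dist a b) :=
      ⟨fun a b h => by rwa [dist_comm]⟩
    have hstep : ∀ s : Finset X, (∀ x ∈ s, g x = c) →
        ∃ y, g y = c ∧ ∀ x ∈ s, ε / 2 ≤ dist x y := by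
      intro s _
      obtain ⟨z, -, hz⟩ := not_subset.1 (hcov (↑s) s.finite_toSet)
      simp only [Set.mem_iUnion, Metric.mem_ball, not_exists] at hz
      have hball : ({x | g x = c} ∩ Metric.ball z (ε / 4)).Nonempty := by
        by_contra h
        rw [Set.not_nonempty_iff_eq_empty] at h
        have hss : Metric.ball z (ε / 4) ⊆ {x | ¬ g x = c} := by
          intro w hw hwc
          have hmem : w ∈ ({x | g x = c} ∩ Metric.ball z (ε / 4)) := ⟨hwc, hw⟩
          rw [h] at hmem
          exact hmem
        exact absurd ((hcomp z (ε/4) (by positivity)).trans_le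
          ((measure_mono hss).trans hnull.le)) (lt_irrefl 0)
      obtain ⟨y, hyc, hyb⟩ := hball
      refine ⟨y, hyc, fun x hx => ?_⟩
      have h1 : ¬ dist z x < ε := hz x hx
      have h2 : dist y z < ε / 4 := by rwa [Metric.mem_ball] at hyb
      have h3 := dist_triangle z y x
      rw [dist_comm z y] at h3
      rw [dist_comm x y]
      push_neg at h1
      linarith [dist_comm y x ▸ h3]
    obtain ⟨f, hfP, hfsep⟩ := exists_seq_of_forall_finset_exists'
      (fun x => g x = c) (fun a b => ε / 2 ≤ dist a b) hstep
    -- disjoint balls of equal positive measure give a contradiction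
    have hdisj : Pairwise (Function.onFun Disjoint fun n => Metric.ball (f n) r) := by
      intro m n hmn
      apply Metric.ball_disjoint_ball
      have := hfsep hmn
      simp only [Function.onFun] at this ⊢
      linarith
    have : μ (⋃ n, Metric.ball (f n) r) = ∑' _ : ℕ, c := by
      rw [measure_iUnion hdisj fun n => measurableSet_ball]
      exact tsum_congr fun n => hfP n
    rw [ENNReal.tsum_const_eq_top_of_ne_zero hcpos] at this
    exact absurd (this ▸ measure_lt_top μ _) (lt_irrefl _)
  -- Step 2 : the completion
  refine ⟨UniformSpace.Completion X, inferInstance,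
    MeasurableSpace.map ((↑) : X → UniformSpace.Completion X) ‹MeasurableSpace X›, ?_⟩
  letI s₁ : MeasurableSpace (UniformSpace.Completion X) :=
    MeasurableSpace.map ((↑) : X → UniformSpace.Completion X) ‹MeasurableSpace X›
  have hφmeas : Measurable ((↑) : X → UniformSpace.Completion X) := fun s hs => hs
  have hφiso : Isometry ((↑) : X → UniformSpace.Completion X) :=
    UniformSpace.Completion.coe_isometry
  refine ⟨μ.map ((↑) : X → UniformSpace.Completion X), UniformSpace.Completion.map T,
    ((↑) : X → UniformSpace.Completion X), Set.univ, Set.range ((↑) : X → UniformSpace.Completion X),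
    ?_, ?_, ?_, ?_, ?_, ?_, ?_, ?_, ?_, ?_, ?_⟩
  · -- compactness
    refine ⟨?_⟩
    rw [isCompact_iff_totallyBounded_isComplete]
    constructor
    · have h1 : TotallyBounded (Set.range ((↑) : X → UniformSpace.Completion X)) := by
        have := htb.image (UniformSpace.Completion.uniformContinuous_coe X)
        rwa [Set.image_univ] at this
      have := h1.closure
      rwa [UniformSpace.Completion.denseRange_coe.closure_range] at this
    · exact completeSpace_iff_isComplete_univ.1 inferInstance
  · exact fun a b => (hTiso.completion_map).dist_eq a b
  · intro x₁ r hrpos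
    have hopen : MeasurableSet (Metric.ball x₁ r) := by
      show MeasurableSet (((↑) : X → UniformSpace.Completion X) ⁻¹' Metric.ball x₁ r)
      exact (Metric.isOpen_ball.preimage (UniformSpace.Completion.continuous_coe X)).measurableSet
    refine ⟨hopen, ?_⟩
    rw [Measure.map_apply hφmeas hopen]
    obtain ⟨x, hx⟩ := Metric.denseRange_iff.1 UniformSpace.Completion.denseRange_coe x₁ r hrpos
    have hsub : Metric.ball x (r - dist x₁ ↑x) ⊆
        ((↑) : X → UniformSpace.Completion X) ⁻¹' Metric.ball x₁ r := by
      intro y hy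
      simp only [Set.mem_preimage, Metric.mem_ball] at *
      have := hφiso.dist_eq y x
      have h3 := dist_triangle (↑y : UniformSpace.Completion X) (↑x) x₁
      rw [dist_comm (↑x : UniformSpace.Completion X) x₁] at h3
      linarith
    exact lt_of_lt_of_le (hcomp x _ (by linarith [hx])) (measure_mono hsub)
  · exact MeasurableSet.univ
  · show MeasurableSet (((↑) : X → UniformSpace.Completion X) ⁻¹' Set.range _)
    rw [Set.preimage_range]
    exact MeasurableSet.univ
  · simp
  · rw [Measure.map_apply hφmeas]
    · rw [Set.preimage_compl, Set.preimage_range, Set.compl_univ]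
      exact measure_empty
    · show MeasurableSet (((↑) : X → UniformSpace.Completion X) ⁻¹' _)
      rw [Set.preimage_compl, Set.preimage_range, Set.compl_univ]
      exact MeasurableSet.empty
  · exact ⟨fun x _ => Set.mem_range_self x, (hφiso.injective.injOn),
      fun y hy => by obtain ⟨x, rfl⟩ := hy; exact ⟨x, trivial, rfl⟩⟩
  · exact hφmeas
  · intro A hA
    exact Measure.map_apply hφmeas hA
  · intro x _
    exact (UniformSpace.Completion.map_coe hTiso.uniformContinuous x).symm
end

section
/- Let (X,μ,T) be a probability-measure-preserving system and d a metric on X such that the set Y = {(x,y) ∈ X×X : ∃ n ≥ 0, d(Tⁿx,Tⁿy) > δ} is μ⊗μ-measurable. If T is pairwise sensitive with constant δ (Y has full product measure), then for every x ∈ X the set S_x = {y : ∀ n ≥ 0, d(Tⁿx,Tⁿy) ≤ δ/2} has μ-measure zero. -/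
open MeasureTheory

/-- If `T` is pairwise sensitive with constant `δ` (the set
`Y = {(x,y) | ∃ n, d(Tⁿx,Tⁿy) > δ}` has full `μ⊗μ`-measure), then for every `x` the set
`S_x = {y | ∀ n, d(Tⁿx,Tⁿy) ≤ δ/2}` is `μ`-null. -/
theorem pairwise_sensitive_implies_slices_null {X : Type*} [MetricSpace X]
    [MeasurableSpace X]
    (μ : Measure X) [IsProbabilityMeasure μ] [μ.IsComplete] (T : X → X)
    (hT : MeasurePreserving T μ μ) (δ : ℝ) (hδ : 0 < δ)
    (hY : MeasurableSet {p : X × X | ∃ n : ℕ, δ < dist (T^[n] p.1) (T^[n] p.2)})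
    (hfull : (μ.prod μ) {p : X × X | ∃ n : ℕ, δ < dist (T^[n] p.1) (T^[n] p.2)}ᶜ = 0) :
    ∀ x : X, μ {y : X | ∀ n : ℕ, dist (T^[n] x) (T^[n] y) ≤ δ / 2} = 0 := by
  intro x
  set S := {y : X | ∀ n : ℕ, dist (T^[n] x) (T^[n] y) ≤ δ / 2} with hS
  have hsub : S ×ˢ S ⊆ {p : X × X | ∃ n : ℕ, δ < dist (T^[n] p.1) (T^[n] p.2)}ᶜ := by
    rintro ⟨y₁, y₂⟩ ⟨h₁, h₂⟩ ⟨n, hn⟩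
    have := (dist_triangle (T^[n] y₁) (T^[n] x) (T^[n] y₂))
    rw [dist_comm (T^[n] y₁) (T^[n] x)] at this
    linarith [h₁ n, h₂ n]
  have hzero : (μ.prod μ) (S ×ˢ S) = 0 := measure_mono_null hsub hfull
  rw [Measure.prod_prod] at hzero
  exact mul_self_eq_zero.mp hzero
end

section
/- Let T be the doubling map Tx = 2x mod 1 on the unit interval I with Lebesgue measure λ and the standard metric d. Then the metric d_T(x,y) = min(sup_{n≥0} d(Tⁿx,Tⁿy), 1) is not λ-compatible: for every 0 < δ < 1, the d_T-ball of radius δ around 0 has Lebesgue measure zero. -/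
open MeasureTheory

/-- The doubling map `x ↦ 2x (mod 1)` on the unit interval `[0,1)`. -/
noncomputable def doubling : (Set.Ico (0:ℝ) 1) → (Set.Ico (0:ℝ) 1) := fun x =>
  ⟨Int.fract (2 * x.1), Set.mem_Ico.mpr ⟨Int.fract_nonneg _, Int.fract_lt_one _⟩⟩

open Set

private lemma fract_coe' (r : ℝ) : ((Int.fract r : ℝ) : AddCircle (1:ℝ)) = (r : AddCircle (1:ℝ)) := by
  rw [QuotientAddGroup.eq_iff_sub_mem, AddSubgroup.mem_zmultiples_iff]
  refine ⟨-⌊r⌋, ?_⟩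
  rw [Int.fract, zsmul_eq_mul]
  push_cast
  ring

private lemma doubling_coe' (w : ℝ) :
    ((Int.fract (2 * w) : ℝ) : AddCircle (1:ℝ)) = (2:ℕ) • (w : AddCircle (1:ℝ)) := by
  rw [fract_coe']
  have h : (2*w : ℝ) = w + w := by ring
  rw [h, QuotientAddGroup.mk_add, two_nsmul]

private lemma iterate_coe' (y : Set.Ico (0:ℝ) 1) (n : ℕ) :
    (((doubling^[n] y).1 : ℝ) : AddCircle (1:ℝ)) = (2^n : ℕ) • ((y.1 : ℝ) : AddCircle (1:ℝ)) := by
  induction n with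
  | zero => simp
  | succ n ih =>
    rw [Function.iterate_succ_apply', pow_succ, mul_comm, mul_smul, ← ih]
    exact doubling_coe' _

private lemma doubling_fixes_zero :
    doubling ⟨0, Set.mem_Ico.mpr ⟨le_rfl, zero_lt_one⟩⟩ = ⟨0, Set.mem_Ico.mpr ⟨le_rfl, zero_lt_one⟩⟩ := by
  apply Subtype.ext
  simp [doubling]

/-- The key measure-zero statement on the circle, via ergodicity of the doubling map. -/
private lemma circle_null (δ : ℝ) (h0 : 0 < δ) (h1 : δ < 1) :
    volume {x : AddCircle (1:ℝ) |
      ∀ n : ℕ, (2^n : ℕ) • x ∈ ((↑) : ℝ → AddCircle (1:ℝ)) '' Icc 0 δ} = 0 := by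
  haveI : Fact ((0:ℝ) < 1) := ⟨one_pos⟩
  set C : Set (AddCircle (1:ℝ)) := ((↑) : ℝ → AddCircle (1:ℝ)) '' Icc 0 δ with hC
  have hCcomp : IsCompact C := isCompact_Icc.image (AddCircle.continuous_mk' 1)
  have hCmeas : MeasurableSet C := hCcomp.measurableSet
  set S : Set (AddCircle (1:ℝ)) := {x | ∀ n : ℕ, (2^n : ℕ) • x ∈ C} with hS
  have hSmeas : MeasurableSet S := by
    have : S = ⋂ n : ℕ, (fun x : AddCircle (1:ℝ) => (2^n : ℕ) • x) ⁻¹' C := by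
      ext x; simp [hS]
    rw [this]
    exact MeasurableSet.iInter fun n => hCmeas.preimage (continuous_nsmul _).measurable
  -- volume of C is at most δ
  have hCvol : volume C ≤ ENNReal.ofReal δ := by
    rw [AddCircle.add_projection_respects_measure (1:ℝ) 0 hCmeas]
    have hsub : (QuotientAddGroup.mk ⁻¹' C : Set ℝ) ∩ Ioc 0 (0 + 1) ⊆ Ioc 0 δ ∪ {1} := by
      rintro t ⟨htC, ht⟩
      rw [zero_add] at ht
      obtain ⟨s, hs, hst⟩ := htC
      have hmem : (t : AddCircle (1:ℝ)) = (s : AddCircle (1:ℝ)) := hst.symm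
      rw [QuotientAddGroup.eq_iff_sub_mem, AddSubgroup.mem_zmultiples_iff] at hmem
      obtain ⟨k, hk⟩ := hmem
      rw [zsmul_eq_mul, mul_one] at hk
      have hk0 : k = 0 ∨ k = 1 := by
        have h1 : (k:ℝ) > -1 := by
          have := hs.2; have := ht.1; nlinarith [hs.1, ht.2]
        have h2 : (k:ℝ) ≤ 1 := by nlinarith [hs.1, ht.2]
        have h1' : (-1 : ℤ) < k := by exact_mod_cast h1
        have h2' : k ≤ (1:ℤ) := by exact_mod_cast h2
        omega
      rcases hk0 with rfl | rfl
      · left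
        have : t = s := by push_cast at hk; linarith
        exact ⟨ht.1, this ▸ hs.2⟩
      · right
        have : t = s + 1 := by push_cast at hk; linarith
        have : t = 1 := le_antisymm ht.2 (by rw [this]; linarith [hs.1])
        simp [this]
    calc volume ((QuotientAddGroup.mk ⁻¹' C : Set ℝ) ∩ Ioc 0 (0 + 1))
        ≤ volume (Ioc 0 δ ∪ ({1} : Set ℝ)) := measure_mono hsub
      _ ≤ volume (Ioc (0:ℝ) δ) + volume ({1} : Set ℝ) := measure_union_le _ _
      _ = ENNReal.ofReal δ := by simp [Real.volume_Ioc]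
  have herg : Ergodic (fun y : AddCircle (1:ℝ) => (2:ℕ) • y) volume :=
    AddCircle.ergodic_nsmul one_lt_two
  have hle : S ⊆ (fun y : AddCircle (1:ℝ) => (2:ℕ) • y) ⁻¹' S := by
    intro x hx n
    have := hx (n + 1)
    rwa [pow_succ, mul_smul] at this
  rcases herg.ae_empty_or_univ_of_ae_le_preimage hSmeas.nullMeasurableSet
      (Filter.Eventually.of_forall fun x hx => hle hx) with h | h
  · simpa [hS] using (measure_congr h).trans measure_empty
  · exfalso
    have hSC : S ⊆ C := fun x hx => by simpa using hx 0
    have h1' : volume S = ENNReal.ofReal 1 := by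
      rw [measure_congr h, AddCircle.measure_univ]
    have : volume S ≤ ENNReal.ofReal δ := le_trans (measure_mono hSC) hCvol
    rw [h1'] at this
    exact absurd (ENNReal.ofReal_le_ofReal_iff h0.le |>.mp this) (not_le.mpr h1)

/-- For the doubling map `T` on `[0,1)` with Lebesgue measure and the standard metric,
the metric `d_T` is not Lebesgue-compatible: for every `0 < δ < 1`, the `d_T`-ball of
radius `δ` around `0` has Lebesgue measure zero. -/
theorem doubling_dT_not_compatible (δ : ℝ) (h0 : 0 < δ) (h1 : δ < 1) :
    Measure.comap (Subtype.val) volume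
      {y : (Set.Ico (0:ℝ) 1) |
        dT doubling ⟨0, Set.mem_Ico.mpr ⟨le_rfl, zero_lt_one⟩⟩ y < δ} = 0 := by
  haveI : Fact ((0:ℝ) < 1) := ⟨one_pos⟩
  set x0 : Set.Ico (0:ℝ) 1 := ⟨0, Set.mem_Ico.mpr ⟨le_rfl, zero_lt_one⟩⟩ with hx0
  set E := {y : (Set.Ico (0:ℝ) 1) | dT doubling x0 y < δ} with hE
  -- each y in E has all iterates in [0, δ]
  have key : ∀ y ∈ E, ∀ n : ℕ, (doubling^[n] y).1 ∈ Icc 0 δ := by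
    intro y hy n
    have hdT : dT doubling x0 y < δ := hy
    rw [dT] at hdT
    have hne : min (⨆ n : ℕ, edist (doubling^[n] x0) (doubling^[n] y)) 1 ≠ ⊤ :=
      ((min_le_right _ _).trans_lt ENNReal.one_lt_top).ne
    have hmin : min (⨆ n : ℕ, edist (doubling^[n] x0) (doubling^[n] y)) 1 < ENNReal.ofReal δ :=
      (ENNReal.lt_ofReal_iff_toReal_lt hne).2 hdT
    have hδ1 : ENNReal.ofReal δ ≤ 1 := by
      rw [← ENNReal.ofReal_one]; exact ENNReal.ofReal_le_ofReal h1.le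
    have hsup : (⨆ n : ℕ, edist (doubling^[n] x0) (doubling^[n] y)) < ENNReal.ofReal δ := by
      by_contra hc
      push_neg at hc
      exact absurd (le_min hc hδ1) (not_le.mpr hmin)
    have hn : edist (doubling^[n] x0) (doubling^[n] y) < ENNReal.ofReal δ :=
      (le_iSup (fun n => edist (doubling^[n] x0) (doubling^[n] y)) n).trans_lt hsup
    rw [Function.iterate_fixed doubling_fixes_zero] at hn
    rw [edist_dist] at hn
    have hdd : dist x0 (doubling^[n] y) < δ :=
      (ENNReal.ofReal_lt_ofReal_iff h0).mp hn
    have : |(doubling^[n] y).1 - 0| < δ := by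
      rw [Subtype.dist_eq, Real.dist_eq, abs_sub_comm] at hdd
      simpa [hx0] using hdd
    have hge := (doubling^[n] y).2.1
    rw [sub_zero, abs_of_nonneg hge] at this
    exact ⟨hge, this.le⟩
  rw [(MeasurableEmbedding.subtype_coe measurableSet_Ico).comap_apply]
  -- the image of E lies in π⁻¹ S up to endpoints
  set S : Set (AddCircle (1:ℝ)) := {x : AddCircle (1:ℝ) |
      ∀ n : ℕ, (2^n : ℕ) • x ∈ ((↑) : ℝ → AddCircle (1:ℝ)) '' Icc 0 δ} with hSdef
  have hmemS : ∀ y ∈ E, ((y.1 : ℝ) : AddCircle (1:ℝ)) ∈ S := by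
    intro y hy n
    rw [← iterate_coe']
    exact ⟨(doubling^[n] y).1, key y hy n, rfl⟩
  have hCmeas : MeasurableSet (((↑) : ℝ → AddCircle (1:ℝ)) '' Icc 0 δ) :=
    (isCompact_Icc.image (AddCircle.continuous_mk' 1)).measurableSet
  have hSmeas : MeasurableSet S := by
    have : S = ⋂ n : ℕ, (fun x : AddCircle (1:ℝ) => (2^n : ℕ) • x) ⁻¹'
        (((↑) : ℝ → AddCircle (1:ℝ)) '' Icc 0 δ) := by
      ext x; simp [hSdef]
    rw [this]
    exact MeasurableSet.iInter fun n => hCmeas.preimage (continuous_nsmul _).measurable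
  have himg : Subtype.val '' E ⊆
      ((QuotientAddGroup.mk ⁻¹' S : Set ℝ) ∩ Ioc 0 (0 + 1)) ∪ {0} := by
    rintro t ⟨y, hy, rfl⟩
    rcases eq_or_lt_of_le y.2.1 with h | h
    · right; simp [← h]
    · left
      refine ⟨hmemS y hy, h, ?_⟩
      rw [zero_add]; exact y.2.2.le
  have hpre : volume ((QuotientAddGroup.mk ⁻¹' S : Set ℝ) ∩ Ioc 0 (0 + 1)) = 0 := by
    have := (AddCircle.measurePreserving_mk (1:ℝ) 0).measure_preimage
      hSmeas.nullMeasurableSet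
    rw [Measure.restrict_apply' measurableSet_Ioc] at this
    rw [this]
    exact circle_null δ h0 h1
  refine le_antisymm ?_ zero_le
  calc volume (Subtype.val '' E)
      ≤ volume (((QuotientAddGroup.mk ⁻¹' S : Set ℝ) ∩ Ioc 0 (0 + 1)) ∪ {0}) :=
        measure_mono himg
    _ ≤ volume ((QuotientAddGroup.mk ⁻¹' S : Set ℝ) ∩ Ioc 0 (0 + 1)) + volume ({0} : Set ℝ) :=
        measure_union_le _ _
    _ = 0 := by rw [hpre, Real.volume_singleton, add_zero]
end
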